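/- Let V be a finite-dimensional real inner product space, C ⊆ V a proper cone and F a Finsler function on C. Then for every p ∈ C^o the set W p := {w ∈ ℝ | 0 ≤ w ∧ ∀ y ∈ C, ⟪p, y⟫ + w * F y ≤ 0} is nonempty and bounded above, and the reverse Cauchy–Schwarz inequality holds: for every y ∈ C and every p ∈ C^o, ⟪p, y⟫ + F^o p * F y ≤ 0, where F^o p = sSup (W p). -/

import Mathlib

/-- The polar cone of `C`. -/
def polarConeSet {V : Type*} [NormedAddCommGroup V] [InnerProductSpace ℝ V]
    (C : Set V) : Set V :=
  {p : V | p ≠ 0 ∧ ∀ y ∈ C, (inner ℝ p y : ℝ) ≤ 0}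

/-- The set whose supremum defines the polar Finsler function `F^o p`. -/
def polarWSet {V : Type*} [NormedAddCommGroup V] [InnerProductSpace ℝ V]
    (C : Set V) (F : V → ℝ) (p : V) : Set ℝ :=
  {w : ℝ | 0 ≤ w ∧ ∀ y ∈ C, (inner ℝ p y : ℝ) + w * F y ≤ 0}

/-- Reverse Cauchy–Schwarz inequality: for every `p` in the polar cone, the defining set
of `F^o p` is nonempty and bounded above, and `⟪p, y⟫ + F^o p * F y ≤ 0` for all
`y ∈ C`, `p ∈ C^o`. -/
theorem reverse_cauchy_schwarz
    {V : Type*} [NormedAddCommGroup V] [InnerProductSpace ℝ V] [FiniteDimensional ℝ V]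
    (C : Set V) (hne : C.Nonempty) (hconv : Convex ℝ C) (h0 : (0:V) ∉ C)
    (hcone : ∀ (s : ℝ) (y : V), 0 < s → y ∈ C → s • y ∈ C)
    (hclosed : IsClosed (C ∪ {0}))
    (hint : (interior (C ∪ {0})).Nonempty)
    (F : V → ℝ)
    (hFnn : ∀ y ∈ C, 0 ≤ F y)
    (hFhom : ∀ (s : ℝ) (y : V), 0 < s → y ∈ C → F (s • y) = s * F y)
    (hFconc : ∀ y ∈ C, ∀ w ∈ C, ∀ t : ℝ, t ∈ Set.Icc (0:ℝ) 1 →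
      t * F y + (1 - t) * F w ≤ F (t • y + (1 - t) • w))
    (hFpos : ∃ y₁ ∈ C, 0 < F y₁) :
    (∀ p ∈ polarConeSet C, (polarWSet C F p).Nonempty ∧ BddAbove (polarWSet C F p)) ∧
    (∀ y ∈ C, ∀ p ∈ polarConeSet C,
      (inner ℝ p y : ℝ) + sSup (polarWSet C F p) * F y ≤ 0) := by
  obtain ⟨y₁, hy₁, hFy₁⟩ := hFpos
  have hmain : ∀ p ∈ polarConeSet C,
      (polarWSet C F p).Nonempty ∧ BddAbove (polarWSet C F p) := by
    intro p hp
    refine ⟨⟨0, le_refl 0, fun y hy => by simpa using hp.2 y hy⟩, ?_⟩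
    refine ⟨-(inner ℝ p y₁ : ℝ) / F y₁, fun w hw => ?_⟩
    have h := hw.2 y₁ hy₁
    rw [le_div_iff₀ hFy₁]
    linarith
  refine ⟨hmain, fun y hy p hp => ?_⟩
  obtain ⟨hne', hbdd⟩ := hmain p hp
  rcases eq_or_lt_of_le (hFnn y hy) with hF0 | hFpos'
  · have hs : 0 ≤ sSup (polarWSet C F p) :=
      le_csSup hbdd ⟨le_refl 0, fun y hy => by simpa using hp.2 y hy⟩
    rw [← hF0, mul_zero, add_zero]
    exact hp.2 y hy
  · have : sSup (polarWSet C F p) ≤ -(inner ℝ p y : ℝ) / F y := by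
      apply csSup_le hne'
      intro w hw
      have h := hw.2 y hy
      rw [le_div_iff₀ hFpos']
      linarith
    rw [le_div_iff₀ hFpos'] at this
    linarith
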